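/- Let g : ℝ × ℝ → ℝ be continuous and continuously differentiable in its second variable, and let γ : ℝ → ℝ be continuous. Let u : ℝ² → ℝ be a twice continuously differentiable solution of the damped wave equation ∂²u/∂t² − ∂²u/∂x² + (∂g/∂u)(t, u) + γ(x) ∂u/∂t = 0 on ℝ². Then there exist continuously differentiable functions zᵗ, zˣ : ℝ² → ℝ such that the map ψ(t,x) = (t, x; u(t,x), pᵗ(t,x), pˣ(t,x); zᵗ(t,x), zˣ(t,x)), with pᵗ = ∂u/∂t and pˣ = −∂u/∂x, satisfies the full 2-cocontact Hamilton–De Donder–Weyl system: ∂u/∂t = pᵗ, ∂u/∂x = −pˣ, ∂pᵗ/∂t + ∂pˣ/∂x = −(∂g/∂u)(t,u) − γ(x)pᵗ, and ∂zᵗ/∂t + ∂zˣ/∂x = ½(pᵗ)² − ½(pˣ)² − g(t,u) − γ(x)zᵗ. -/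

import Mathlib

open Set

lemma aux_hasFDerivAt_of_partials (f f₁ f₂ : ℝ × ℝ → ℝ)
    (h1 : ∀ w : ℝ × ℝ, HasDerivAt (fun t => f (t, w.2)) (f₁ w) w.1)
    (h2 : ∀ w : ℝ × ℝ, HasDerivAt (fun x => f (w.1, x)) (f₂ w) w.2)
    (hc1 : Continuous f₁) (w₀ : ℝ × ℝ) :
    HasFDerivAt f ((f₁ w₀) • (ContinuousLinearMap.fst ℝ ℝ ℝ)
      + (f₂ w₀) • (ContinuousLinearMap.snd ℝ ℝ ℝ)) w₀ := by
  rw [hasFDerivAt_iff_isLittleO, Asymptotics.isLittleO_iff]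
  intro c hc
  have hc2 : (0:ℝ) < c / 2 := by linarith
  -- continuity of f₁ at w₀
  obtain ⟨δ₁, hδ₁pos, hδ₁⟩ := Metric.continuousAt_iff.mp hc1.continuousAt (c/2) hc2
  -- the second-variable derivative bound
  have H2 := Asymptotics.isLittleO_iff.mp (hasDerivAt_iff_isLittleO.mp (h2 w₀)) hc2
  obtain ⟨δ₂, hδ₂pos, hδ₂⟩ := Metric.eventually_nhds_iff.mp H2
  have hδpos : (0:ℝ) < min δ₁ δ₂ := lt_min hδ₁pos hδ₂pos
  filter_upwards [Metric.ball_mem_nhds w₀ hδpos] with w hw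
  rw [Metric.mem_ball, Prod.dist_eq, max_lt_iff] at hw
  obtain ⟨hwt, hwx⟩ := hw
  have hwt1 : dist w.1 w₀.1 < δ₁ := lt_of_lt_of_le hwt (min_le_left _ _)
  have hwx1 : dist w.2 w₀.2 < δ₁ := lt_of_lt_of_le hwx (min_le_left _ _)
  have hwx2 : dist w.2 w₀.2 < δ₂ := lt_of_lt_of_le hwx (min_le_right _ _)
  -- mean value step for the first variable
  have key : ∃ ξ : ℝ, dist ξ w₀.1 ≤ dist w.1 w₀.1 ∧
      f w - f (w₀.1, w.2) = f₁ (ξ, w.2) * (w.1 - w₀.1) := by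
    rcases lt_trichotomy w₀.1 w.1 with h | h | h
    · obtain ⟨ξ, hξ, hξeq⟩ := exists_hasDerivAt_eq_slope (fun t => f (t, w.2))
        (fun t => f₁ (t, w.2)) h
        (Continuous.continuousOn (by
          exact continuous_iff_continuousAt.2 fun t => (h1 (t, w.2)).continuousAt))
        (fun ξ _ => h1 (ξ, w.2))
      refine ⟨ξ, ?_, ?_⟩
      · rw [Real.dist_eq, Real.dist_eq, abs_of_pos (by linarith [hξ.1, hξ.2] : (0:ℝ) < w.1 - w₀.1)]
        rw [abs_of_pos (by linarith [hξ.1] : (0:ℝ) < ξ - w₀.1)]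
        linarith [hξ.2]
      · simp only [Prod.mk.eta] at hξeq
        rw [hξeq, div_mul_cancel₀ _ (by intro hh; rw [sub_eq_zero] at hh; exact (ne_of_gt h) hh : w.1 - w₀.1 ≠ 0)]
    · exact ⟨w₀.1, by simp [h], by simp [h]⟩
    · obtain ⟨ξ, hξ, hξeq⟩ := exists_hasDerivAt_eq_slope (fun t => f (t, w.2))
        (fun t => f₁ (t, w.2)) h
        (Continuous.continuousOn (by
          exact continuous_iff_continuousAt.2 fun t => (h1 (t, w.2)).continuousAt))
        (fun ξ _ => h1 (ξ, w.2))
      refine ⟨ξ, ?_, ?_⟩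
      · rw [Real.dist_eq, Real.dist_eq, abs_of_neg (by linarith [hξ.1, hξ.2] : w.1 - w₀.1 < 0)]
        rw [abs_of_neg (by linarith [hξ.2] : ξ - w₀.1 < 0)]
        linarith [hξ.1]
      · simp only [Prod.mk.eta] at hξeq
        have hne : w₀.1 - w.1 ≠ 0 := by
          intro hh; rw [sub_eq_zero] at hh; exact (ne_of_gt h) hh
        rw [hξeq, div_mul_eq_mul_div, eq_div_iff hne]
        ring
  obtain ⟨ξ, hξd, hξeq⟩ := key
  have hfd1 : dist (ξ, w.2) w₀ < δ₁ := by
    rw [Prod.dist_eq, max_lt_iff]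
    exact ⟨lt_of_le_of_lt hξd hwt1, hwx1⟩
  have e1 : |f₁ (ξ, w.2) - f₁ w₀| ≤ c / 2 := le_of_lt (by
    have := hδ₁ hfd1
    rwa [Real.dist_eq] at this)
  have e2 : ‖f (w₀.1, w.2) - f w₀ - (w.2 - w₀.2) • f₂ w₀‖ ≤ c / 2 * ‖w.2 - w₀.2‖ := by
    have := hδ₂ hwx2
    simpa using this
  -- assemble
  have hnt : |w.1 - w₀.1| ≤ ‖w - w₀‖ := by
    have := norm_fst_le (w - w₀)
    simpa [Real.norm_eq_abs] using this
  have hnx : |w.2 - w₀.2| ≤ ‖w - w₀‖ := by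
    have := norm_snd_le (w - w₀)
    simpa [Real.norm_eq_abs] using this
  have decomp : f w - f w₀ - ((f₁ w₀) • (ContinuousLinearMap.fst ℝ ℝ ℝ)
      + (f₂ w₀) • (ContinuousLinearMap.snd ℝ ℝ ℝ)) (w - w₀)
      = (f₁ (ξ, w.2) - f₁ w₀) * (w.1 - w₀.1)
        + (f (w₀.1, w.2) - f w₀ - (w.2 - w₀.2) • f₂ w₀) := by
    simp only [ContinuousLinearMap.add_apply, ContinuousLinearMap.coe_smul',
      Pi.smul_apply, ContinuousLinearMap.coe_fst', ContinuousLinearMap.coe_snd',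
      smul_eq_mul, Prod.fst_sub, Prod.snd_sub]
    linear_combination hξeq
  rw [decomp]
  calc ‖(f₁ (ξ, w.2) - f₁ w₀) * (w.1 - w₀.1)
        + (f (w₀.1, w.2) - f w₀ - (w.2 - w₀.2) • f₂ w₀)‖
      ≤ ‖(f₁ (ξ, w.2) - f₁ w₀) * (w.1 - w₀.1)‖
        + ‖f (w₀.1, w.2) - f w₀ - (w.2 - w₀.2) • f₂ w₀‖ := norm_add_le _ _
    _ ≤ c / 2 * ‖w - w₀‖ + c / 2 * ‖w - w₀‖ := by
        refine add_le_add ?_ (le_trans e2 (by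
          have : ‖w.2 - w₀.2‖ ≤ ‖w - w₀‖ := by simpa [Real.norm_eq_abs] using hnx
          nlinarith [norm_nonneg (w - w₀)]))
        rw [norm_mul]
        have h1' : ‖f₁ (ξ, w.2) - f₁ w₀‖ ≤ c / 2 := by simpa [Real.norm_eq_abs] using e1
        have h2' : ‖w.1 - w₀.1‖ ≤ ‖w - w₀‖ := by simpa [Real.norm_eq_abs] using hnt
        nlinarith [norm_nonneg (w.1 - w₀.1), norm_nonneg (f₁ (ξ, w.2) - f₁ w₀)]
    _ = c * ‖w - w₀‖ := by ring

open MeasureTheory intervalIntegral in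
lemma aux_ftc (f : ℝ → ℝ) (hf : Continuous f) (a t : ℝ) :
    HasDerivAt (fun τ => ∫ s in a..τ, f s) (f t) t :=
  intervalIntegral.integral_hasDerivAt_right (hf.intervalIntegrable a t)
    (hf.stronglyMeasurableAtFilter _ _) hf.continuousAt

open MeasureTheory in
lemma aux_param_cont (F : ℝ → ℝ → ℝ) (hF : Continuous (Function.uncurry F)) :
    Continuous fun w : ℝ × ℝ => ∫ s in (0:ℝ)..w.1, F w.2 s := by
  have h := intervalIntegral.continuous_parametric_primitive_of_continuous (μ := volume)
    (f := F) (a₀ := 0) hF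
  have heq : (fun w : ℝ × ℝ => ∫ s in (0:ℝ)..w.1, F w.2 s)
      = (fun p : ℝ × ℝ => ∫ t in (0:ℝ)..p.2, F p.1 t) ∘ (fun w => (w.2, w.1)) := rfl
  rw [heq]
  exact h.comp (continuous_snd.prodMk continuous_fst)

set_option maxHeartbeats 1000000 in
open MeasureTheory in
lemma aux_param_deriv (F F' : ℝ → ℝ → ℝ) (hF : Continuous (Function.uncurry F))
    (hF' : Continuous (Function.uncurry F'))
    (hd : ∀ y s : ℝ, HasDerivAt (fun z => F z s) (F' y s) y) (a b x : ℝ) :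
    HasDerivAt (fun y => ∫ s in a..b, F y s) (∫ s in a..b, F' x s) x := by
  obtain ⟨M, hM⟩ := ((isCompact_closedBall x 1).prod isCompact_uIcc).bddAbove_image
    hF'.norm.continuousOn
  refine (intervalIntegral.hasDerivAt_integral_of_dominated_loc_of_deriv_le
    (F := F) (F' := F') (bound := fun _ => M) (Metric.ball_mem_nhds x one_pos) ?_ ?_ ?_ ?_ ?_ ?_).2
  · exact Filter.Eventually.of_forall fun y =>
      (hF.comp (continuous_const.prodMk continuous_id)).aestronglyMeasurable
  · exact (hF.comp (continuous_const.prodMk continuous_id)).intervalIntegrable a b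
  · exact (hF'.comp (continuous_const.prodMk continuous_id)).aestronglyMeasurable
  · refine Filter.Eventually.of_forall fun s hs y hy => ?_
    exact hM ⟨(y, s), ⟨Metric.ball_subset_closedBall hy, Set.uIoc_subset_uIcc hs⟩, rfl⟩
  · exact intervalIntegrable_const
  · exact Filter.Eventually.of_forall fun s _ y _ => hd y s

lemma aux_contDiff_of_partials (f f₁ f₂ : ℝ × ℝ → ℝ)
    (h1 : ∀ w : ℝ × ℝ, HasDerivAt (fun t => f (t, w.2)) (f₁ w) w.1)
    (h2 : ∀ w : ℝ × ℝ, HasDerivAt (fun x => f (w.1, x)) (f₂ w) w.2)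
    (hc1 : Continuous f₁) (hc2 : Continuous f₂) :
    ContDiff ℝ 1 f ∧ ∀ (w v : ℝ × ℝ), fderiv ℝ f w v = f₁ w * v.1 + f₂ w * v.2 := by
  have key := aux_hasFDerivAt_of_partials f f₁ f₂ h1 h2 hc1
  have hfd : ∀ w, fderiv ℝ f w = f₁ w • (ContinuousLinearMap.fst ℝ ℝ ℝ)
      + f₂ w • (ContinuousLinearMap.snd ℝ ℝ ℝ) := fun w => (key w).fderiv
  refine ⟨?_, ?_⟩
  · rw [contDiff_one_iff_fderiv]
    refine ⟨fun w => (key w).differentiableAt, ?_⟩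
    have heq : (fderiv ℝ f) = fun w => f₁ w • (ContinuousLinearMap.fst ℝ ℝ ℝ)
        + f₂ w • (ContinuousLinearMap.snd ℝ ℝ ℝ) := funext hfd
    rw [heq]
    exact (hc1.smul continuous_const).add (hc2.smul continuous_const)
  · intro w v
    rw [hfd w]
    simp [ContinuousLinearMap.add_apply, smul_eq_mul, mul_comm]

set_option maxHeartbeats 2000000 in
/-- Any `C²` solution `u` of the damped wave equation with forcing
`u_tt − u_xx + (∂g/∂u)(t,u) + γ(x) u_t = 0` can be completed, with `pᵗ = u_t` and
`pˣ = −u_x`, by continuously differentiable functions `zᵗ, zˣ` to a solution of the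
full 2-cocontact Hamilton–De Donder–Weyl system for the Hamiltonian
`h = ½(pᵗ)² − ½(pˣ)² + g(t,u) + γ(x)zᵗ`. Here points of `ℝ²` are pairs `w = (t, x)`,
`∂/∂t` is the directional derivative along `(1,0)` and `∂/∂x` along `(0,1)`. -/
theorem damped_wave_lifts_to_hdw (g : ℝ → ℝ → ℝ) (γ : ℝ → ℝ)
    (hgc : Continuous (Function.uncurry g)) (hg : ∀ t, ContDiff ℝ 1 (g t))
    (hγ : Continuous γ)
    (u : ℝ × ℝ → ℝ) (hu : ContDiff ℝ 2 u)
    (hpde : ∀ w : ℝ × ℝ,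
      fderiv ℝ (fun y => fderiv ℝ u y (1, 0)) w (1, 0)
      - fderiv ℝ (fun y => fderiv ℝ u y (0, 1)) w (0, 1)
      + deriv (g w.1) (u w) + γ w.2 * fderiv ℝ u w (1, 0) = 0) :
    ∃ zt zx pt px : ℝ × ℝ → ℝ,
      ContDiff ℝ 1 zt ∧ ContDiff ℝ 1 zx ∧
      (∀ w : ℝ × ℝ, fderiv ℝ u w (1, 0) = pt w) ∧
      (∀ w : ℝ × ℝ, fderiv ℝ u w (0, 1) = -px w) ∧
      (∀ w : ℝ × ℝ, fderiv ℝ pt w (1, 0) + fderiv ℝ px w (0, 1)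
        = -(deriv (g w.1) (u w)) - γ w.2 * pt w) ∧
      (∀ w : ℝ × ℝ, fderiv ℝ zt w (1, 0) + fderiv ℝ zx w (0, 1)
        = (1/2) * pt w ^ 2 - (1/2) * px w ^ 2 - g w.1 (u w) - γ w.2 * zt w) := by
  have hud : Differentiable ℝ u := hu.differentiable (by norm_num)
  have huc : Continuous u := hu.continuous
  set A : ℝ × ℝ → ℝ := fun y => fderiv ℝ u y (1, 0) with hA_def
  set B : ℝ × ℝ → ℝ := fun y => fderiv ℝ u y (0, 1) with hB_def
  have hA : ContDiff ℝ 1 A := (hu.fderiv_right (by norm_num)).clm_apply contDiff_const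
  have hB : ContDiff ℝ 1 B := (hu.fderiv_right (by norm_num)).clm_apply contDiff_const
  have hAc : Continuous A := hA.continuous
  have hBc : Continuous B := hB.continuous
  have hA'c : Continuous fun w => fderiv ℝ A w (1, 0) :=
    ((contDiff_one_iff_fderiv.mp hA).2).clm_apply continuous_const
  have hB'c1 : Continuous fun w => fderiv ℝ B w (1, 0) :=
    ((contDiff_one_iff_fderiv.mp hB).2).clm_apply continuous_const
  have hB'c : Continuous fun w => fderiv ℝ B w (0, 1) :=
    ((contDiff_one_iff_fderiv.mp hB).2).clm_apply continuous_const
  have pd1 : ∀ (φ : ℝ × ℝ → ℝ), Differentiable ℝ φ →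
      ∀ w : ℝ × ℝ, HasDerivAt (fun t => φ (t, w.2)) (fderiv ℝ φ w (1, 0)) w.1 := by
    intro φ hφ w
    exact (hφ (w.1, w.2)).hasFDerivAt.comp_hasDerivAt w.1
      (HasDerivAt.prodMk (hasDerivAt_id w.1) (hasDerivAt_const w.1 w.2))
  have pd2 : ∀ (φ : ℝ × ℝ → ℝ), Differentiable ℝ φ →
      ∀ w : ℝ × ℝ, HasDerivAt (fun x => φ (w.1, x)) (fderiv ℝ φ w (0, 1)) w.2 := by
    intro φ hφ w
    exact (hφ (w.1, w.2)).hasFDerivAt.comp_hasDerivAt w.2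
      (HasDerivAt.prodMk (hasDerivAt_const w.2 w.1) (hasDerivAt_id w.2))
  have hgu : ∀ w : ℝ × ℝ, deriv (g w.1) (u w)
      = fderiv ℝ B w (0, 1) - fderiv ℝ A w (1, 0) - γ w.2 * A w := by
    intro w
    have h := hpde w
    have hb : γ w.2 * fderiv ℝ u w (1, 0) = γ w.2 * A w := rfl
    rw [hb] at h
    linarith
  set D : ℝ × ℝ → ℝ :=
    fun w => (fderiv ℝ B w (0, 1) - fderiv ℝ A w (1, 0) - γ w.2 * A w) * B w with hD_def
  have hDc : Continuous D := ((hB'c.sub hA'c).sub ((hγ.comp continuous_snd).mul hAc)).mul hBc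
  have hGc : Continuous fun w : ℝ × ℝ => g w.1 (u w) := hgc.comp (continuous_fst.prodMk huc)
  have hGx : ∀ s x : ℝ, HasDerivAt (fun y => g s (u (s, y))) (D (s, x)) x := by
    intro s x
    have h1 : HasDerivAt (fun y => u (s, y)) (B (s, x)) x := pd2 u hud (s, x)
    have h2 : HasDerivAt (g s) (deriv (g s) (u (s, x))) (u (s, x)) :=
      (((hg s).differentiable one_ne_zero) (u (s, x))).hasDerivAt
    have h3 := h2.comp x h1
    have h4 : D (s, x) = deriv (g s) (u (s, x)) * B (s, x) := by
      rw [hD_def]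
      have := hgu (s, x)
      simp only at this ⊢
      rw [this]
    rw [h4]
    exact h3
  set zt : ℝ × ℝ → ℝ := fun w => -∫ s in (0:ℝ)..w.1, g s (u (s, w.2)) with hzt_def
  have hzt1 : ∀ w : ℝ × ℝ, HasDerivAt (fun t => zt (t, w.2)) (-(g w.1 (u w))) w.1 := by
    intro w
    have hc : Continuous fun s => g s (u (s, w.2)) :=
      hgc.comp (continuous_id.prodMk (huc.comp (continuous_id.prodMk continuous_const)))
    have h := (aux_ftc (fun s => g s (u (s, w.2))) hc 0 w.1).neg
    exact h
  have hzt2 : ∀ w : ℝ × ℝ, HasDerivAt (fun x => zt (w.1, x))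
      (-∫ s in (0:ℝ)..w.1, D (s, w.2)) w.2 := by
    intro w
    have hF : Continuous (Function.uncurry fun y s => g s (u (s, y))) :=
      hgc.comp (continuous_snd.prodMk (huc.comp (continuous_snd.prodMk continuous_fst)))
    have hF' : Continuous (Function.uncurry fun y s => D (s, y)) :=
      hDc.comp (continuous_snd.prodMk continuous_fst)
    have h := (aux_param_deriv (fun y s => g s (u (s, y))) (fun y s => D (s, y))
      hF hF' (fun y s => hGx s y) 0 w.1 w.2).neg
    exact h
  have hztc2 : Continuous fun w : ℝ × ℝ => -∫ s in (0:ℝ)..w.1, D (s, w.2) :=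
    (aux_param_cont (fun y s => D (s, y))
      (hDc.comp (continuous_snd.prodMk continuous_fst))).neg
  obtain ⟨hztC, hztfd⟩ := aux_contDiff_of_partials zt (fun w => -(g w.1 (u w)))
    (fun w => -∫ s in (0:ℝ)..w.1, D (s, w.2)) hzt1 hzt2 hGc.neg hztc2
  set Q : ℝ × ℝ → ℝ := fun w => 1/2 * A w ^ 2 - 1/2 * B w ^ 2 - γ w.2 * zt w with hQ_def
  have hQc : Continuous Q :=
    ((continuous_const.mul (hAc.pow 2)).sub (continuous_const.mul (hBc.pow 2))).sub
      ((hγ.comp continuous_snd).mul hztC.continuous)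
  set Q1 : ℝ × ℝ → ℝ := fun w =>
    A w * fderiv ℝ A w (1, 0) - B w * fderiv ℝ B w (1, 0) + γ w.2 * g w.1 (u w) with hQ1_def
  have hQ1c : Continuous Q1 :=
    ((hAc.mul hA'c).sub (hBc.mul hB'c1)).add ((hγ.comp continuous_snd).mul hGc)
  have hQ1d : ∀ w : ℝ × ℝ, HasDerivAt (fun t => Q (t, w.2)) (Q1 w) w.1 := by
    intro w
    have ha := pd1 A (hA.differentiable one_ne_zero) w
    have hb := pd1 B (hB.differentiable one_ne_zero) w
    have hz := hzt1 w
    have h := (((ha.pow 2).const_mul (1/2:ℝ)).sub ((hb.pow 2).const_mul (1/2:ℝ))).sub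
      (hz.const_mul (γ w.2))
    refine h.congr_deriv ?_
    have e1 : A (w.1, w.2) = A w := rfl
    have e2 : B (w.1, w.2) = B w := rfl
    simp only [hQ1_def, e1, e2]
    push_cast
    ring
  set zx : ℝ × ℝ → ℝ := fun w => ∫ r in (0:ℝ)..w.2, Q (w.1, r) with hzx_def
  have hzx2 : ∀ w : ℝ × ℝ, HasDerivAt (fun x => zx (w.1, x)) (Q w) w.2 := by
    intro w
    have h := aux_ftc (fun r => Q (w.1, r))
      (hQc.comp (continuous_const.prodMk continuous_id)) 0 w.2
    exact h
  have hzx1 : ∀ w : ℝ × ℝ, HasDerivAt (fun t => zx (t, w.2))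
      (∫ r in (0:ℝ)..w.2, Q1 (w.1, r)) w.1 := by
    intro w
    exact aux_param_deriv (fun t r => Q (t, r)) (fun t r => Q1 (t, r))
      (by exact hQc) (by exact hQ1c) (fun y s => hQ1d (y, s)) 0 w.2 w.1
  have hzx1c : Continuous fun w : ℝ × ℝ => ∫ r in (0:ℝ)..w.2, Q1 (w.1, r) := by
    have h := aux_param_cont (fun t r => Q1 (t, r)) (by exact hQ1c)
    have heq : (fun w : ℝ × ℝ => ∫ r in (0:ℝ)..w.2, Q1 (w.1, r))
        = (fun w : ℝ × ℝ => ∫ s in (0:ℝ)..w.1, (fun t r => Q1 (t, r)) w.2 s)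
          ∘ (fun w : ℝ × ℝ => (w.2, w.1)) := rfl
    rw [heq]
    exact h.comp (continuous_snd.prodMk continuous_fst)
  obtain ⟨hzxC, hzxfd⟩ := aux_contDiff_of_partials zx
    (fun w => ∫ r in (0:ℝ)..w.2, Q1 (w.1, r)) Q hzx1 hzx2 hzx1c hQc
  refine ⟨zt, zx, A, fun y => -B y, hztC, hzxC, ?_, ?_, ?_, ?_⟩
  · intro w; rfl
  · intro w
    show fderiv ℝ u w (0, 1) = -(-B w)
    rw [neg_neg]
  · intro w
    have hnB : fderiv ℝ (fun y => -B y) w (0, 1) = -(fderiv ℝ B w (0, 1)) := by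
      rw [fderiv_fun_neg]; simp
    rw [hnB, hgu w]
    ring
  · intro w
    rw [hztfd w (1, 0), hzxfd w (0, 1)]
    have e0 : ((1:ℝ), (0:ℝ)).1 = 1 := rfl
    simp only [hQ_def]
    norm_num
    ring
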